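/- Let w > 0 be a real number, let n₁, n₂ be positive integers and p₁, p₂ integers with 0 < p₁ < n₁ and 0 < p₂ < n₂; set n = n₁ + n₂ and p = p₁ + p₂. Define M(m,k) = min over v ∈ ℝ of [k·w·ln(1 + exp(−v)) + (m−k)·w·ln(1 + exp(v))] for integers 0 < k < m, and define the entropy impurity H(m,k) = −(k/m)·ln(k/m) − (1 − k/m)·ln(1 − k/m). Then M(n,p) − M(n₁,p₁) − M(n₂,p₂) = n·w·( H(n,p) − (n₁/n)·H(n₁,p₁) − (n₂/n)·H(n₂,p₂) ). (Theorem 1(b) consequence: the logistic-loss risk reduction of a split equals |S|w times the entropy impurity reduction.) -/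

import Mathlib

/-- Minimum partial empirical risk of a constant prediction under the logistic loss,
on a set of `m` examples with `k` positives, each of weight `w`. -/
noncomputable def logisticMinRisk (w m k : ℝ) : ℝ :=
  sInf (Set.range fun v : ℝ =>
    k * w * Real.log (1 + Real.exp (-v)) + (m - k) * w * Real.log (1 + Real.exp v))

/-- Entropy impurity of a set of `m` examples with `k` positives. -/
noncomputable def entropyImpurity (m k : ℝ) : ℝ :=
  -(k / m) * Real.log (k / m) - (1 - k / m) * Real.log (1 - k / m)

lemma aux_one_sub_inv_le_log {x : ℝ} (hx : 0 < x) : 1 - 1/x ≤ Real.log x := by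
  have h := Real.log_le_sub_one_of_pos (inv_pos.mpr hx)
  rw [Real.log_inv] at h
  have : 1 - x⁻¹ ≤ Real.log x := by linarith
  simpa [one_div] using this

lemma aux_mH {m k : ℝ} (hk : 0 < k) (hkm : k < m) :
    m * entropyImpurity m k
      = -(k * (Real.log k - Real.log m)) - (m - k) * (Real.log (m - k) - Real.log m) := by
  have hm : 0 < m := hk.trans hkm
  have hmk : 0 < m - k := by linarith
  unfold entropyImpurity
  have h2 : (1 : ℝ) - k / m = (m - k) / m := by field_simp
  rw [h2, Real.log_div hmk.ne' hm.ne', Real.log_div hk.ne' hm.ne']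
  field_simp

lemma aux_lb {w m k : ℝ} (hw : 0 < w) (hk : 0 < k) (hkm : k < m) (v : ℝ) :
    m * w * entropyImpurity m k
      ≤ k * w * Real.log (1 + Real.exp (-v)) + (m - k) * w * Real.log (1 + Real.exp v) := by
  have hm : 0 < m := hk.trans hkm
  have hmk : 0 < m - k := by linarith
  set A := 1 + Real.exp (-v) with hAdef
  set B := 1 + Real.exp v with hBdef
  have hA : 0 < A := by positivity
  have hB : 0 < B := by positivity
  have hAB : m / A + m / B = m := by
    rw [hAdef, hBdef, Real.exp_neg]
    have he : 0 < Real.exp v := Real.exp_pos v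
    field_simp
    ring
  -- first inequality
  have h1 := aux_one_sub_inv_le_log (x := A * (k / m)) (by positivity)
  rw [Real.log_mul hA.ne' (by positivity), Real.log_div hk.ne' hm.ne'] at h1
  have h1' : k - m / A ≤ k * (Real.log A + (Real.log k - Real.log m)) := by
    have := mul_le_mul_of_nonneg_left h1 hk.le
    have hkey : k * (1 - 1 / (A * (k / m))) = k - m / A := by
      field_simp
    linarith [hkey ▸ this]
  -- second inequality
  have h2 := aux_one_sub_inv_le_log (x := B * ((m - k) / m)) (by positivity)
  rw [Real.log_mul hB.ne' (by positivity), Real.log_div hmk.ne' hm.ne'] at h2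
  have h2' : (m - k) - m / B ≤ (m - k) * (Real.log B + (Real.log (m - k) - Real.log m)) := by
    have := mul_le_mul_of_nonneg_left h2 hmk.le
    have hkey : (m - k) * (1 - 1 / (B * ((m - k) / m))) = (m - k) - m / B := by
      field_simp
    linarith [hkey ▸ this]
  have main : -(k * (Real.log k - Real.log m)) - (m - k) * (Real.log (m - k) - Real.log m)
      ≤ k * Real.log A + (m - k) * Real.log B := by nlinarith [h1', h2', hAB]
  calc m * w * entropyImpurity m k
      = w * (m * entropyImpurity m k) := by ring
    _ = w * (-(k * (Real.log k - Real.log m)) - (m - k) * (Real.log (m - k) - Real.log m)) := by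
        rw [aux_mH hk hkm]
    _ ≤ w * (k * Real.log A + (m - k) * Real.log B) :=
        mul_le_mul_of_nonneg_left main hw.le
    _ = k * w * Real.log A + (m - k) * w * Real.log B := by ring

lemma logisticMinRisk_eq {w m k : ℝ} (hw : 0 < w) (hk : 0 < k) (hkm : k < m) :
    logisticMinRisk w m k = m * w * entropyImpurity m k := by
  have hm : 0 < m := hk.trans hkm
  have hmk : 0 < m - k := by linarith
  unfold logisticMinRisk
  set f : ℝ → ℝ := fun v =>
    k * w * Real.log (1 + Real.exp (-v)) + (m - k) * w * Real.log (1 + Real.exp v) with hf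
  have hlb : ∀ v, m * w * entropyImpurity m k ≤ f v := fun v => aux_lb hw hk hkm v
  have hv0 : f (Real.log (k / (m - k))) = m * w * entropyImpurity m k := by
    have hpos : 0 < k / (m - k) := by positivity
    have he1 : Real.exp (Real.log (k / (m - k))) = k / (m - k) := Real.exp_log hpos
    have he2 : Real.exp (-(Real.log (k / (m - k)))) = (m - k) / k := by
      rw [Real.exp_neg, he1, inv_div]
    have hs1 : 1 + (m - k) / k = m / k := by field_simp; ring
    have hs2 : 1 + k / (m - k) = m / (m - k) := by field_simp; ring
    rw [hf]
    simp only [he1, he2, hs1, hs2]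
    rw [Real.log_div hm.ne' hk.ne', Real.log_div hm.ne' hmk.ne']
    have := aux_mH hk hkm
    nlinarith [this]
  apply le_antisymm
  · exact csInf_le ⟨_, by rintro x ⟨v, rfl⟩; exact hlb v⟩ ⟨_, hv0⟩
  · exact le_csInf ⟨f 0, ⟨0, rfl⟩⟩ (by rintro x ⟨v, rfl⟩; exact hlb v)

/-- Theorem 1(b), consequence: the logistic-loss risk reduction of a split equals
`n w` times the entropy impurity reduction. -/
theorem logistic_risk_reduction_eq_entropy_impurity_reduction
    (w : ℝ) (hw : 0 < w) (n₁ n₂ p₁ p₂ : ℕ)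
    (hp₁ : 0 < p₁) (hp₁' : p₁ < n₁) (hp₂ : 0 < p₂) (hp₂' : p₂ < n₂) :
    logisticMinRisk w ((n₁ : ℝ) + n₂) ((p₁ : ℝ) + p₂)
        - logisticMinRisk w (n₁ : ℝ) (p₁ : ℝ) - logisticMinRisk w (n₂ : ℝ) (p₂ : ℝ)
      = ((n₁ : ℝ) + n₂) * w *
        (entropyImpurity ((n₁ : ℝ) + n₂) ((p₁ : ℝ) + p₂)
          - ((n₁ : ℝ) / ((n₁ : ℝ) + n₂)) * entropyImpurity (n₁ : ℝ) (p₁ : ℝ)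
          - ((n₂ : ℝ) / ((n₁ : ℝ) + n₂)) * entropyImpurity (n₂ : ℝ) (p₂ : ℝ)) := by
  have h1 : (0 : ℝ) < p₁ := by exact_mod_cast hp₁
  have h1' : (p₁ : ℝ) < n₁ := by exact_mod_cast hp₁'
  have h2 : (0 : ℝ) < p₂ := by exact_mod_cast hp₂
  have h2' : (p₂ : ℝ) < n₂ := by exact_mod_cast hp₂'
  have hn : (0 : ℝ) < (n₁ : ℝ) + n₂ := by linarith
  rw [logisticMinRisk_eq hw (by linarith) (by linarith),
      logisticMinRisk_eq hw h1 h1', logisticMinRisk_eq hw h2 h2']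
  field_simp
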